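/- Let p be a prime and let H be a subgroup of GL₂(𝔽_p) whose order is divisible by p, and let H_p be a Sylow p-subgroup of H. Then either H_p is a normal subgroup of H, or H contains SL₂(𝔽_p) (i.e. H contains the image of SL₂(𝔽_p) in GL₂(𝔽_p)). -/

import Mathlib

set_option maxHeartbeats 1000000
open Matrix

open Matrix

variable {p : ℕ}

section SqZero
variable {F : Type*} [Field F]

/-- A nilpotent 2×2 matrix over a field squares to zero. -/
lemma sq_zero_of_pow_eq_zero {X : Matrix (Fin 2) (Fin 2) F} {n : ℕ}
    (hn : n ≠ 0) (h : X ^ n = 0) : X * X = 0 := by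
  have hdet : X.det = 0 := by
    have : X.det ^ n = 0 := by rw [← Matrix.det_pow, h]; simp [hn]
    exact pow_eq_zero_iff hn |>.mp this
  rw [Matrix.det_fin_two] at hdet
  have hCH : X * X = X.trace • X := by
    ext i j
    fin_cases i <;> fin_cases j <;>
      simp [Matrix.mul_apply, Fin.sum_univ_two, Matrix.trace_fin_two, smul_eq_mul] <;>
      first
        | ring1
        | linear_combination -hdet
  have key : ∀ k : ℕ, X ^ (k + 1) = X.trace ^ k • X := by
    intro k
    induction k with
    | zero => simp
    | succ k ih =>
      rw [pow_succ, ih, smul_mul_assoc, hCH, smul_smul, pow_succ]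
  obtain ⟨m, rfl⟩ := Nat.exists_eq_succ_of_ne_zero hn
  rw [key m] at h
  by_cases hX : X = 0
  · rw [hX]; simp
  · obtain ⟨i, j, hij⟩ : ∃ i j, X i j ≠ 0 := by
      by_contra hc
      push_neg at hc
      exact hX (by ext i j; simp [hc])
    have : X.trace ^ m * X i j = 0 := by
      have := congrFun (congrFun h i) j
      simpa using this
    have htr : X.trace = 0 := by
      rcases mul_eq_zero.mp this with h' | h'
      · exact (pow_eq_zero_iff'.mp h').1
      · exact absurd h' hij
    rw [hCH, htr]; simp
end SqZero

section OrderP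
variable (p) [Fact p.Prime]

lemma sq_zero_of_pow_p_eq_one (g : GL (Fin 2) (ZMod p)) (h : g ^ p = 1) :
    ((g : Matrix (Fin 2) (Fin 2) (ZMod p)) - 1) * ((g : Matrix (Fin 2) (Fin 2) (ZMod p)) - 1)
      = 0 := by
  have hX : ((g : Matrix (Fin 2) (Fin 2) (ZMod p)) - 1) ^ p = 0 := by
    rw [sub_pow_char_of_commute p (Commute.one_right _), one_pow, ← Units.val_pow_eq_pow_val, h,
      Units.val_one, sub_self]
  exact sq_zero_of_pow_eq_zero (Fact.out : p.Prime).ne_zero hX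

end OrderP

namespace SylowSL2

/-- Parametrization of square-zero 2×2 matrices over `ZMod p`. -/
def nf (p : ℕ) [Fact p.Prime] : (ZMod p × (ZMod p)ˣ) ⊕ ZMod p → Matrix (Fin 2) (Fin 2) (ZMod p)
  | .inl (a, b) => !![a, (b : ZMod p); -(a * a) * (b : ZMod p)⁻¹, -a]
  | .inr c => !![0, 0; c, 0]

variable (p : ℕ) [Fact p.Prime]

lemma nf_sq (x : (ZMod p × (ZMod p)ˣ) ⊕ ZMod p) : nf p x * nf p x = 0 := by
  rcases x with ⟨a, b⟩ | c <;> unfold nf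
  · have hb : (b : ZMod p) * (b : ZMod p)⁻¹ = 1 := mul_inv_cancel₀ (Units.ne_zero b)
    rw [Matrix.mul_fin_two]
    ext i j
    fin_cases i <;> fin_cases j <;> simp [-ZMod.inv_coe_unit] <;>
      first
        | ring1
        | linear_combination (a*a) * hb
        | linear_combination (-(a*a)) * hb
  · rw [Matrix.mul_fin_two]
    ext i j
    fin_cases i <;> fin_cases j <;> simp

lemma nf_inj : Function.Injective (nf p) := by
  rintro (⟨a, b⟩ | c) (⟨a', b'⟩ | c') h <;> unfold nf at h
  · have h00 := congrFun (congrFun h 0) 0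
    have h01 := congrFun (congrFun h 0) 1
    simp [-ZMod.inv_coe_unit] at h00 h01
    subst h00
    congr 1
    exact Prod.ext rfl (Units.ext h01)
  · have h01 := congrFun (congrFun h 0) 1
    simp [-ZMod.inv_coe_unit] at h01
  · have h01 := congrFun (congrFun h 0) 1
    simp [-ZMod.inv_coe_unit] at h01
    exact absurd h01.symm (Units.ne_zero b')
  · have h10 := congrFun (congrFun h 1) 0
    simp at h10
    rw [h10]

lemma nf_surj {N : Matrix (Fin 2) (Fin 2) (ZMod p)} (hN : N * N = 0) :
    ∃ x, nf p x = N := by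
  have h00 := congrFun (congrFun hN 0) 0
  have h01 := congrFun (congrFun hN 0) 1
  have h11 := congrFun (congrFun hN 1) 1
  simp [Matrix.mul_apply, Fin.sum_univ_two] at h00 h01 h11
  by_cases h : N 0 1 = 0
  · refine ⟨.inr (N 1 0), ?_⟩
    have ha : N 0 0 = 0 := by
      have h2 : N 0 0 * N 0 0 = 0 := by rw [h] at h00; simpa using h00
      rcases mul_eq_zero.mp h2 with h' | h' <;> exact h'
    have hd : N 1 1 = 0 := by
      have h2 : N 1 1 * N 1 1 = 0 := by rw [h] at h11; simpa using h11
      rcases mul_eq_zero.mp h2 with h' | h' <;> exact h'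
    unfold nf
    ext i j
    fin_cases i <;> fin_cases j <;> simp [h, ha, hd]
  · refine ⟨.inl (N 0 0, Units.mk0 (N 0 1) h), ?_⟩
    have hd : N 1 1 = -(N 0 0) := by
      have h2 : N 0 1 * (N 0 0 + N 1 1) = 0 := by linear_combination h01
      rcases mul_eq_zero.mp h2 with h' | h'
      · exact absurd h' h
      · linear_combination h'
    have hc : -(N 0 0 * N 0 0) * (N 0 1)⁻¹ = N 1 0 := by
      have h2 : (N 0 1)⁻¹ * N 0 1 = 1 := inv_mul_cancel₀ h
      field_simp
      linear_combination -h00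
    unfold nf
    ext i j
    fin_cases i <;> fin_cases j <;> simp [-ZMod.inv_coe_unit, hd, hc]

lemma card_sq_zero :
    (Finset.univ.filter fun N : Matrix (Fin 2) (Fin 2) (ZMod p) => N * N = 0).card = p ^ 2 := by
  classical
  have himg : (Finset.univ.filter fun N : Matrix (Fin 2) (Fin 2) (ZMod p) => N * N = 0)
      = Finset.univ.image (nf p) := by
    ext N
    simp only [Finset.mem_filter, Finset.mem_image, Finset.mem_univ, true_and]
    constructor
    · intro h
      obtain ⟨x, hx⟩ := nf_surj p h
      exact ⟨x, hx⟩
    · rintro ⟨x, rfl⟩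
      exact nf_sq p x
  rw [himg, Finset.card_image_of_injective _ (nf_inj p), Finset.card_univ]
  have : Fintype.card ((ZMod p × (ZMod p)ˣ) ⊕ ZMod p) = p * (p - 1) + p := by
    simp [ZMod.card_units p, ZMod.card p, Fintype.card_sum, Fintype.card_prod]
  rw [this]
  have hp1 : 1 ≤ p := (Fact.out : p.Prime).one_lt.le.trans' (by norm_num)
  obtain ⟨q, rfl⟩ : ∃ q, p = q + 1 := ⟨p - 1, by omega⟩
  simp only [Nat.add_sub_cancel]
  ring

variable (p : ℕ) [Fact p.Prime]

lemma cardGL : Nat.card (GL (Fin 2) (ZMod p)) = (p ^ 2 - 1) * (p ^ 2 - p) := by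
  rw [Matrix.card_GL_field]
  simp [Fin.prod_univ_two, ZMod.card]

lemma p2_not_dvd_cardGL : ¬ p ^ 2 ∣ Nat.card (GL (Fin 2) (ZMod p)) := by
  have hp : p.Prime := Fact.out
  rw [cardGL]
  intro hdvd
  have hpp : 2 ≤ p := hp.two_le
  have hnd : ¬ p ∣ p ^ 2 - 1 := by
    intro h
    have h2 : p ∣ p ^ 2 := dvd_pow_self p two_ne_zero
    have h3 : p ∣ p ^ 2 - (p ^ 2 - 1) := Nat.dvd_sub h2 h
    have h4 : p ^ 2 - (p ^ 2 - 1) = 1 := by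
      have : 1 ≤ p ^ 2 := Nat.one_le_two_pow.trans (Nat.pow_le_pow_left hpp 2)
      omega
    rw [h4] at h3
    exact hp.one_lt.ne' (Nat.dvd_one.mp h3)
  have hco : (Nat.Coprime (p ^ 2) (p ^ 2 - 1)) :=
    Nat.Coprime.pow_left 2 ((Nat.Prime.coprime_iff_not_dvd hp).mpr hnd)
  have h5 : p ^ 2 ∣ p ^ 2 - p := (Nat.Coprime.dvd_of_dvd_mul_left hco hdvd)
  have h6 : p ^ 2 - p ≠ 0 := by
    have : p < p ^ 2 := by nlinarith
    omega
  have h7 := Nat.le_of_dvd (Nat.pos_of_ne_zero h6) h5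
  have : p < p ^ 2 := by nlinarith
  omega

variable {p}

lemma mem_of_sq_zero (H : Subgroup (GL (Fin 2) (ZMod p))) (hdvd : p ∣ Nat.card H)
    (Hp : Sylow p ↥H) (hnorm : ¬ (Hp : Subgroup ↥H).Normal) :
    ∀ N : Matrix (Fin 2) (Fin 2) (ZMod p), N ≠ 0 → N * N = 0 →
      ∃ g : GL (Fin 2) (ZMod p), g ∈ H ∧
        (g : Matrix (Fin 2) (Fin 2) (ZMod p)) = 1 + N := by
  classical
  have hp : p.Prime := Fact.out
  have hcard_pos : Nat.card ↥H ≠ 0 := Nat.card_pos.ne'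
  -- the p-part of |H| is exactly p
  have hnot2 : ¬ p ^ 2 ∣ Nat.card ↥H := fun h =>
    p2_not_dvd_cardGL p (h.trans H.card_subgroup_dvd_card)
  have hfact : (Nat.card ↥H).factorization p = 1 := by
    have h1 : 1 ≤ (Nat.card ↥H).factorization p :=
      (Nat.Prime.pow_dvd_iff_le_factorization hp hcard_pos).mp (by simpa [pow_one] using hdvd)
    have h2 : ¬ 2 ≤ (Nat.card ↥H).factorization p := fun h =>
      hnot2 ((Nat.Prime.pow_dvd_iff_le_factorization hp hcard_pos).mpr h)
    omega
  have cardSyl : ∀ Q : Sylow p ↥H, Nat.card ↥(Q : Subgroup ↥H) = p := by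
    intro Q
    rw [Q.card_eq_multiplicity, hfact, pow_one]
  -- the number of Sylow subgroups is at least p + 1
  have hn1 : Nat.card (Sylow p ↥H) ≠ 1 := by
    intro h1
    apply hnorm
    have hsub : Subsingleton (Sylow p ↥H) := (Nat.card_eq_one_iff_unique.mp h1).1
    have : Subgroup.normalizer ((Hp : Subgroup ↥H) : Set ↥H) = ⊤ := by
      rw [Subgroup.eq_top_iff']
      intro g
      exact Sylow.smul_eq_iff_mem_normalizer.mp (Subsingleton.elim _ _)
    exact Subgroup.normalizer_eq_top_iff.mp this
  have hnge : p + 1 ≤ Nat.card (Sylow p ↥H) := by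
    have hmod := card_sylow_modEq_one p ↥H
    have hpos : 0 < Nat.card (Sylow p ↥H) := Nat.card_pos
    have hdvd1 : p ∣ Nat.card (Sylow p ↥H) - 1 :=
      (Nat.modEq_iff_dvd' hpos).mp hmod.symm
    have : Nat.card (Sylow p ↥H) - 1 ≠ 0 := by omega
    have := Nat.le_of_dvd (Nat.pos_of_ne_zero this) hdvd1
    omega
  -- Finset of order-`p`-style elements of `H`
  set TH : Finset (GL (Fin 2) (ZMod p)) :=
    Finset.univ.filter (fun g => g ∈ H ∧
      ((g : Matrix (Fin 2) (Fin 2) (ZMod p)) - 1) ≠ 0 ∧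
      ((g : Matrix (Fin 2) (Fin 2) (ZMod p)) - 1) * ((g : Matrix (Fin 2) (Fin 2) (ZMod p)) - 1)
        = 0) with hTH
  set S : Finset (Matrix (Fin 2) (Fin 2) (ZMod p)) :=
    (Finset.univ.filter fun N => N * N = 0).erase 0 with hS
  have card_S : S.card = p ^ 2 - 1 := by
    rw [hS, Finset.card_erase_of_mem (by simp), card_sq_zero]
  -- the Finset attached to each Sylow subgroup
  set f : Sylow p ↥H → Finset (GL (Fin 2) (ZMod p)) := fun Q =>
    (Finset.univ.image
      (fun x : ↥(Q : Subgroup ↥H) => ((x : ↥H) : GL (Fin 2) (ZMod p)))).erase 1 with hf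
  have hinj : ∀ Q : Sylow p ↥H,
      Function.Injective (fun x : ↥(Q : Subgroup ↥H) => ((x : ↥H) : GL (Fin 2) (ZMod p))) := by
    intro Q x y hxy
    exact Subtype.ext (Subtype.ext hxy)
  have hpow : ∀ (Q : Sylow p ↥H) (x : ↥(Q : Subgroup ↥H)),
      (((x : ↥H) : GL (Fin 2) (ZMod p))) ^ p = 1 := by
    intro Q x
    have hxp : x ^ p = 1 := by
      simpa only [cardSyl Q] using pow_card_eq_one' (x := x)
    have hxp' : (x : ↥H) ^ p = 1 := by
      have := congrArg (fun y : ↥(Q : Subgroup ↥H) => (y : ↥H)) hxp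
      simpa using this
    have := congrArg (fun y : ↥H => (y : GL (Fin 2) (ZMod p))) hxp'
    simpa using this
  have hf_sub : ∀ Q : Sylow p ↥H, f Q ⊆ TH := by
    intro Q g hg
    rw [hf] at hg
    obtain ⟨hg1, hg2⟩ := Finset.mem_erase.mp hg
    obtain ⟨x, -, hx⟩ := Finset.mem_image.mp hg2
    rw [hTH, Finset.mem_filter]
    refine ⟨Finset.mem_univ _, ?_, ?_, ?_⟩
    · rw [← hx]; exact ((x : ↥H)).2
    · intro hzero
      exact hg1 (Units.ext (by
        have := sub_eq_zero.mp hzero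
        simpa using this))
    · apply sq_zero_of_pow_p_eq_one p
      rw [← hx]
      exact hpow Q x
  have hf_card : ∀ Q : Sylow p ↥H, (f Q).card = p - 1 := by
    intro Q
    rw [hf]
    have h1mem : (1 : GL (Fin 2) (ZMod p)) ∈ Finset.univ.image
        (fun x : ↥(Q : Subgroup ↥H) => ((x : ↥H) : GL (Fin 2) (ZMod p))) := by
      refine Finset.mem_image.mpr ⟨1, Finset.mem_univ _, ?_⟩
      simp
    rw [Finset.card_erase_of_mem h1mem, Finset.card_image_of_injective _ (hinj Q),
      Finset.card_univ, ← Nat.card_eq_fintype_card, cardSyl Q]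
  have hf_disj : ∀ Q ∈ (Finset.univ : Finset (Sylow p ↥H)), ∀ R ∈ Finset.univ,
      Q ≠ R → Disjoint (f Q) (f R) := by
    intro Q _ R _ hQR
    rw [Finset.disjoint_left]
    intro g hgQ hgR
    rw [hf] at hgQ hgR
    obtain ⟨hg1, hg2⟩ := Finset.mem_erase.mp hgQ
    obtain ⟨-, hg3⟩ := Finset.mem_erase.mp hgR
    obtain ⟨x, -, hx⟩ := Finset.mem_image.mp hg2
    obtain ⟨y, -, hy⟩ := Finset.mem_image.mp hg3
    have hxy : (x : ↥H) = (y : ↥H) := Subtype.ext (by rw [hx, hy])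
    have hQ0 : (x : ↥H) ∈ (Q : Subgroup ↥H) := x.2
    have hR0 : (x : ↥H) ∈ (R : Subgroup ↥H) := hxy ▸ y.2
    have h0ne : (x : ↥H) ≠ 1 := by
      intro h
      apply hg1
      rw [← hx, h]
      simp
    have h0pow : (x : ↥H) ^ p = 1 := by
      have hxp : x ^ p = 1 := by
        simpa only [cardSyl Q] using pow_card_eq_one' (x := x)
      have := congrArg (fun y : ↥(Q : Subgroup ↥H) => (y : ↥H)) hxp
      simpa using this
    have horder : orderOf (x : ↥H) = p := by
      have hdvd' : orderOf (x : ↥H) ∣ p := orderOf_dvd_of_pow_eq_one h0pow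
      rcases (Nat.Prime.eq_one_or_self_of_dvd hp _ hdvd') with h | h
      · exact absurd (orderOf_eq_one_iff.mp h) h0ne
      · exact h
    have hzQ : Subgroup.zpowers (x : ↥H) = (Q : Subgroup ↥H) := by
      apply Subgroup.eq_of_le_of_card_ge (Subgroup.zpowers_le.mpr hQ0)
      rw [cardSyl Q, Nat.card_zpowers, horder]
    have hzR : Subgroup.zpowers (x : ↥H) = (R : Subgroup ↥H) := by
      apply Subgroup.eq_of_le_of_card_ge (Subgroup.zpowers_le.mpr hR0)
      rw [cardSyl R, Nat.card_zpowers, horder]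
    exact hQR (Sylow.ext (hzQ ▸ hzR))
  -- lower bound on the cardinality of TH
  have hTH_card : p ^ 2 - 1 ≤ TH.card := by
    have hsub : (Finset.univ : Finset (Sylow p ↥H)).biUnion f ⊆ TH :=
      Finset.biUnion_subset.mpr (fun Q _ => hf_sub Q)
    have hcardb : ((Finset.univ : Finset (Sylow p ↥H)).biUnion f).card
        = (Nat.card (Sylow p ↥H)) * (p - 1) := by
      rw [Finset.card_biUnion hf_disj]
      simp only [hf_card]
      rw [Finset.sum_const, smul_eq_mul, Finset.card_univ, Nat.card_eq_fintype_card]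
    have h1 := Finset.card_le_card hsub
    rw [hcardb] at h1
    have h2 : (p + 1) * (p - 1) ≤ Nat.card (Sylow p ↥H) * (p - 1) :=
      Nat.mul_le_mul_right _ hnge
    have h3 : (p + 1) * (p - 1) = p ^ 2 - 1 := by
      obtain ⟨q, rfl⟩ : ∃ q, p = q + 1 := ⟨p - 1, by have := hp.two_le; omega⟩
      have e1 : q + 1 - 1 = q := Nat.succ_sub_one q
      have e2 : (q + 1) ^ 2 = q * q + 2 * q + 1 := by ring
      have e3 : (q + 1 + 1) * q = q * q + 2 * q := by ring
      rw [e1, e2, e3]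
      omega
    rw [h3] at h2
    omega
  -- image of TH in the square-zero matrices
  have himg_sub : TH.image (fun g : GL (Fin 2) (ZMod p) =>
      (g : Matrix (Fin 2) (Fin 2) (ZMod p)) - 1) ⊆ S := by
    intro N hN
    obtain ⟨g, hg, rfl⟩ := Finset.mem_image.mp hN
    rw [hTH, Finset.mem_filter] at hg
    rw [hS, Finset.mem_erase, Finset.mem_filter]
    exact ⟨hg.2.2.1, Finset.mem_univ _, hg.2.2.2⟩
  have himg_card : (TH.image (fun g : GL (Fin 2) (ZMod p) =>
      (g : Matrix (Fin 2) (Fin 2) (ZMod p)) - 1)).card = TH.card := by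
    apply Finset.card_image_of_injective
    intro g g' hgg'
    exact Units.ext (by simpa using sub_left_injective hgg')
  have himg_eq : TH.image (fun g : GL (Fin 2) (ZMod p) =>
      (g : Matrix (Fin 2) (Fin 2) (ZMod p)) - 1) = S := by
    apply Finset.eq_of_subset_of_card_le himg_sub
    rw [himg_card, card_S]
    exact hTH_card
  -- conclusion
  intro N hN0 hNsq
  have hNS : N ∈ S := by
    rw [hS, Finset.mem_erase, Finset.mem_filter]
    exact ⟨hN0, Finset.mem_univ _, hNsq⟩
  rw [← himg_eq] at hNS
  obtain ⟨g, hg, hg2⟩ := Finset.mem_image.mp hNS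
  rw [hTH, Finset.mem_filter] at hg
  exact ⟨g, hg.2.1, by rw [← hg2]; abel⟩


variable (p : ℕ)

/-- Upper elementary matrix as an element of `GL₂`. -/
def uU (t : ZMod p) : GL (Fin 2) (ZMod p) :=
  ⟨!![1, t; 0, 1], !![1, -t; 0, 1],
    by rw [Matrix.mul_fin_two, Matrix.one_fin_two]; ext i j; fin_cases i <;> fin_cases j <;>
      simp,
    by rw [Matrix.mul_fin_two, Matrix.one_fin_two]; ext i j; fin_cases i <;> fin_cases j <;>
      simp⟩

/-- Lower elementary matrix as an element of `GL₂`. -/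
def lL (t : ZMod p) : GL (Fin 2) (ZMod p) :=
  ⟨!![1, 0; t, 1], !![1, 0; -t, 1],
    by rw [Matrix.mul_fin_two, Matrix.one_fin_two]; ext i j; fin_cases i <;> fin_cases j <;>
      simp,
    by rw [Matrix.mul_fin_two, Matrix.one_fin_two]; ext i j; fin_cases i <;> fin_cases j <;>
      simp⟩

variable [Fact p.Prime] {p}

lemma mem_of_lower_ne (H : Subgroup (GL (Fin 2) (ZMod p)))
    (hu : ∀ t, uU p t ∈ H) (hl : ∀ t, lL p t ∈ H) (g : GL (Fin 2) (ZMod p))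
    (hdet : (g : Matrix (Fin 2) (Fin 2) (ZMod p)).det = 1)
    (hc : (g : Matrix (Fin 2) (Fin 2) (ZMod p)) 1 0 ≠ 0) : g ∈ H := by
  set M : Matrix (Fin 2) (Fin 2) (ZMod p) := (g : Matrix (Fin 2) (Fin 2) (ZMod p)) with hM
  rw [Matrix.det_fin_two] at hdet
  have key : g = uU p ((M 0 0 - 1) * (M 1 0)⁻¹) * lL p (M 1 0)
      * uU p ((M 1 1 - 1) * (M 1 0)⁻¹) := by
    apply Units.ext
    rw [Units.val_mul, Units.val_mul]
    show M = _
    unfold uU lL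
    rw [Matrix.eta_fin_two M]
    simp only [Units.val_mk]
    rw [Matrix.mul_fin_two, Matrix.mul_fin_two]
    ext i j
    fin_cases i <;> fin_cases j <;> simp <;> field_simp <;>
      first
        | ring1
        | linear_combination hdet
        | linear_combination -hdet
        | linear_combination 2 * hdet
        | linear_combination -2 * hdet
        | linear_combination M 1 0 * hdet
        | linear_combination (-(M 1 0)) * hdet
  rw [key]
  exact H.mul_mem (H.mul_mem (hu _) (hl _)) (hu _)

lemma mem_of_det_one (H : Subgroup (GL (Fin 2) (ZMod p)))
    (hu : ∀ t, uU p t ∈ H) (hl : ∀ t, lL p t ∈ H) (g : GL (Fin 2) (ZMod p))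
    (hdet : (g : Matrix (Fin 2) (Fin 2) (ZMod p)).det = 1) : g ∈ H := by
  by_cases hc : (g : Matrix (Fin 2) (Fin 2) (ZMod p)) 1 0 ≠ 0
  · exact mem_of_lower_ne H hu hl g hdet hc
  · push_neg at hc
    set g' := g * lL p 1 with hg'
    have hg'det : ((g' : Matrix (Fin 2) (Fin 2) (ZMod p))).det = 1 := by
      rw [hg', Units.val_mul, Matrix.det_mul, hdet]
      show 1 * (!![1, 0; (1 : ZMod p), 1]).det = 1
      rw [Matrix.det_fin_two_of]
      ring
    have h11 : (g : Matrix (Fin 2) (Fin 2) (ZMod p)) 1 1 ≠ 0 := by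
      intro h
      rw [Matrix.det_fin_two, hc, h] at hdet
      simp at hdet
    have hg'c : (g' : Matrix (Fin 2) (Fin 2) (ZMod p)) 1 0 ≠ 0 := by
      rw [hg', Units.val_mul]
      show ((g : Matrix (Fin 2) (Fin 2) (ZMod p)) * !![1, 0; (1 : ZMod p), 1]) 1 0 ≠ 0
      rw [Matrix.mul_apply, Fin.sum_univ_two]
      simpa [hc] using h11
    have hg'mem : g' ∈ H := mem_of_lower_ne H hu hl g' hg'det hg'c
    have : g = g' * (lL p 1)⁻¹ := by rw [hg', mul_inv_cancel_right]
    rw [this]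
    exact H.mul_mem hg'mem (H.inv_mem (hl 1))

end SylowSL2

/-- Let `H ⊆ GL₂(𝔽_p)` be a subgroup of order divisible by `p`, and let `H_p`
be a Sylow `p`-subgroup of `H`.  Then either `H_p` is normal in `H`, or `H`
contains (the image in `GL₂(𝔽_p)` of) `SL₂(𝔽_p)`, i.e. every invertible
matrix of determinant `1`. -/
theorem sylow_normal_or_contains_SL2 (p : ℕ) (hp : p.Prime)
    (H : Subgroup (GL (Fin 2) (ZMod p))) (hdvd : p ∣ Nat.card H)
    (Hp : Sylow p H) :
    (Hp : Subgroup H).Normal ∨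
      ∀ g : GL (Fin 2) (ZMod p),
        (g : Matrix (Fin 2) (Fin 2) (ZMod p)).det = 1 → g ∈ H := by
  by_cases hnorm : (Hp : Subgroup H).Normal
  · exact Or.inl hnorm
  · right
    haveI : Fact p.Prime := ⟨hp⟩
    intro g hdet
    have helem := SylowSL2.mem_of_sq_zero H hdvd Hp hnorm
    have hu : ∀ t, SylowSL2.uU p t ∈ H := by
      intro t
      by_cases ht : t = 0
      · have h1 : SylowSL2.uU p 0 = 1 := by
          apply Units.ext
          show !![1, (0 : ZMod p); 0, 1] = 1
          rw [Matrix.one_fin_two]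
        rw [ht, h1]
        exact H.one_mem
      · obtain ⟨g', hg'H, hg'⟩ := helem !![0, t; 0, 0]
          (by
            intro h
            exact ht (by simpa using congrFun (congrFun h 0) 1))
          (by
            rw [Matrix.mul_fin_two]
            ext i j
            fin_cases i <;> fin_cases j <;> simp)
        have heq : g' = SylowSL2.uU p t := by
          apply Units.ext
          rw [hg']
          show 1 + !![0, t; 0, 0] = !![1, t; 0, 1]
          rw [Matrix.one_fin_two]
          ext i j
          fin_cases i <;> fin_cases j <;> simp
        exact heq ▸ hg'H
    have hl : ∀ t, SylowSL2.lL p t ∈ H := by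
      intro t
      by_cases ht : t = 0
      · have h1 : SylowSL2.lL p 0 = 1 := by
          apply Units.ext
          show !![1, (0 : ZMod p); 0, 1] = 1
          rw [Matrix.one_fin_two]
        rw [ht, h1]
        exact H.one_mem
      · obtain ⟨g', hg'H, hg'⟩ := helem !![0, 0; t, 0]
          (by
            intro h
            exact ht (by simpa using congrFun (congrFun h 1) 0))
          (by
            rw [Matrix.mul_fin_two]
            ext i j
            fin_cases i <;> fin_cases j <;> simp)
        have heq : g' = SylowSL2.lL p t := by
          apply Units.ext
          rw [hg']
          show 1 + !![0, 0; t, 0] = !![1, 0; t, 1]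
          rw [Matrix.one_fin_two]
          ext i j
          fin_cases i <;> fin_cases j <;> simp
        exact heq ▸ hg'H
    exact SylowSL2.mem_of_det_one H hu hl g hdet
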